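/- Suppose a new vertex v with incident edge set E(v) is inserted into G, and let l = max over e in E(v) of the new trussness τ_new(e). Then for every old edge e of G with τ_old(e) ≥ l, the trussness is unchanged: τ_new(e) = τ_old(e). (Rule 1 for node insertion.) -/

import Mathlib

open SimpleGraph

/-- Support of an edge (u,v) in a subgraph K: number of common neighbors of u and v in K. -/
noncomputable def esupp {V : Type*} {G : SimpleGraph V} (K : G.Subgraph) (u v : V) : ℕ :=
  {w | K.Adj u w ∧ K.Adj v w}.ncard

/-- K is a k-truss: every edge of K is contained in at least k-2 triangles within K. -/
def IsKTruss {V : Type*} {G : SimpleGraph V} (K : G.Subgraph) (k : ℕ) : Prop :=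
  ∀ u v, K.Adj u v → k - 2 ≤ esupp K u v

/-- Trussness of edge (u,v) in G: the largest k such that some k-truss of G contains (u,v). -/
noncomputable def tr {V : Type*} (G : SimpleGraph V) (u v : V) : ℕ :=
  sSup {k | ∃ K : G.Subgraph, K.Adj u v ∧ IsKTruss K k}

/-- Support of an edge (u,v) in a graph G. -/
noncomputable def gsupp {V : Type*} (G : SimpleGraph V) (u v : V) : ℕ :=
  {w | G.Adj u w ∧ G.Adj v w}.ncard


lemma esupp_le {V : Type*} [Fintype V] {G : SimpleGraph V} (K : G.Subgraph) (u v : V) :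
    esupp K u v ≤ Fintype.card V := by
  classical
  have := Set.ncard_le_ncard (Set.subset_univ {w | K.Adj u w ∧ K.Adj v w}) Set.finite_univ
  simpa [Set.ncard_univ, esupp] using this

lemma trSet_bdd {V : Type*} [Fintype V] (G : SimpleGraph V) (u v : V) :
    BddAbove {k | ∃ K : G.Subgraph, K.Adj u v ∧ IsKTruss K k} := by
  refine ⟨Fintype.card V + 2, ?_⟩
  rintro k ⟨K, hK, hT⟩
  have h1 := hT u v hK
  have h2 := esupp_le K u v
  omega

lemma trSet_mem_zero {V : Type*} {G : SimpleGraph V} {u v : V} (h : G.Adj u v) :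
    0 ∈ {k | ∃ K : G.Subgraph, K.Adj u v ∧ IsKTruss K k} :=
  ⟨G.subgraphOfAdj h, by simp, fun a b _ => by omega⟩

/-- Rule 1 for node insertion: insert a fresh vertex v with edges to N;
let l be the maximum of the new trussness values of the inserted edges. Then every old
edge of trussness ≥ l keeps its trussness. -/
theorem stmt6 {V : Type*} [Fintype V] (G G' : SimpleGraph V) (v : V) (N : Set V)
    (hvN : v ∉ N) (hIso : ∀ w, ¬ G.Adj v w)
    (hG' : ∀ x y, G'.Adj x y ↔ G.Adj x y ∨ (x = v ∧ y ∈ N) ∨ (y = v ∧ x ∈ N)) :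
    ∀ x y, G.Adj x y → sSup ((tr G' v) '' N) ≤ tr G x y → tr G' x y = tr G x y := by
  intro x y hxy hl
  classical
  have hle : G ≤ G' := fun {a b} h => (hG' a b).mpr (Or.inl h)
  have hsub : {k | ∃ K : G.Subgraph, K.Adj x y ∧ IsKTruss K k} ⊆
      {k | ∃ K : G'.Subgraph, K.Adj x y ∧ IsKTruss K k} := by
    rintro k ⟨K, hK, hT⟩
    exact ⟨⟨K.verts, K.Adj, fun h => hle (K.adj_sub h), K.edge_vert, K.symm⟩, hK, hT⟩
  have hmono : tr G x y ≤ tr G' x y :=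
    csSup_le_csSup (trSet_bdd G' x y) ⟨0, trSet_mem_zero hxy⟩ hsub
  have hne : {k | ∃ K : G'.Subgraph, K.Adj x y ∧ IsKTruss K k}.Nonempty :=
    ⟨0, trSet_mem_zero (hle hxy)⟩
  have hmem : tr G' x y ∈ {k | ∃ K : G'.Subgraph, K.Adj x y ∧ IsKTruss K k} :=
    Nat.sSup_mem hne (trSet_bdd G' x y)
  obtain ⟨K, hKxy, hKT⟩ := hmem
  by_cases hv : ∃ w, K.Adj v w
  · obtain ⟨w, hvw⟩ := hv
    have hG'vw := K.adj_sub hvw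
    have hwN : w ∈ N := by
      rcases (hG' v w).mp hG'vw with h | ⟨_, h⟩ | ⟨h, _⟩
      · exact absurd h (hIso w)
      · exact h
      · exact absurd h.symm hG'vw.ne
    have h1 : tr G' x y ≤ tr G' v w :=
      le_csSup (trSet_bdd G' v w) ⟨K, hvw, hKT⟩
    have h2 : tr G' v w ≤ sSup ((tr G' v) '' N) :=
      le_csSup ((Set.toFinite _).bddAbove) ⟨w, hwN, rfl⟩
    omega
  · push_neg at hv
    have hadjG : ∀ a b, K.Adj a b → G.Adj a b := by
      intro a b h
      rcases (hG' a b).mp (K.adj_sub h) with h' | ⟨ha, _⟩ | ⟨hb, _⟩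
      · exact h'
      · subst ha; exact absurd h (hv b)
      · subst hb; exact absurd h.symm (hv a)
    have h3 : tr G' x y ≤ tr G x y :=
      le_csSup (trSet_bdd G x y)
        ⟨⟨K.verts, K.Adj, fun h => hadjG _ _ h, K.edge_vert, K.symm⟩, hKxy, hKT⟩
    omega
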